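/- arXiv:2402.06670 — 2 statements merged into one kernel-verified Lean document; each statement's English description precedes it below -/
import Mathlib

section
/- For real numbers l, σ, a, b with 0 < σ < b ≤ a and 0 < l ≤ b − σ, the spherocylinder intersection probability P(l,σ,a,b) equals (2/π)·((b−σ)/b)·(l/a) + (2/π)·((a−σ)/a)·(l/b) − (1/π)·l²/(ab) + (σ/a + σ/b − σ²/(ab)). -/
open Real MeasureTheory Filter

/-- `A(l,a) = ∫_0^π min(a, l·|cos φ|) dφ` -/
noncomputable def A2 (l a : ℝ) : ℝ := ∫ φ in (0:ℝ)..π, min a (l * |Real.cos φ|)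

/-- `B(l,b) = ∫_0^π min(b, l·sin φ) dφ` -/
noncomputable def B2 (l b : ℝ) : ℝ := ∫ φ in (0:ℝ)..π, min b (l * Real.sin φ)

/-- `AB(l,a,b) = ∫_0^π min(a, l·|cos φ|)·min(b, l·sin φ) dφ` -/
noncomputable def AB2 (l a b : ℝ) : ℝ :=
  ∫ φ in (0:ℝ)..π, min a (l * |Real.cos φ|) * min b (l * Real.sin φ)

/-- Intersection probability for the 2D Buffon–Laplace needle problem. -/
noncomputable def P2 (l a b : ℝ) : ℝ :=
  (b * A2 l a + a * B2 l b - AB2 l a b) / (π * a * b)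

/-- Intersection probability for the 2D spherocylinder Buffon–Laplace problem. -/
noncomputable def P2sc (l σ a b : ℝ) : ℝ :=
  ((b - σ) * A2 l (a - σ) + (a - σ) * B2 l (b - σ) - AB2 l (a - σ) (b - σ)
    + (σ * a + σ * b - σ ^ 2) * π) / (π * a * b)

/-- `A³ᴰ(l,a) = ∫_0^{π/2} ∫_0^π min(a, l·sin ψ·|cos φ|) dφ dψ` -/
noncomputable def A3 (l a : ℝ) : ℝ :=
  ∫ ψ in (0:ℝ)..(π/2), ∫ φ in (0:ℝ)..π, min a (l * Real.sin ψ * |Real.cos φ|)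

/-- `B³ᴰ(l,b) = ∫_0^{π/2} ∫_0^π min(b, l·sin ψ·sin φ) dφ dψ` -/
noncomputable def B3 (l b : ℝ) : ℝ :=
  ∫ ψ in (0:ℝ)..(π/2), ∫ φ in (0:ℝ)..π, min b (l * Real.sin ψ * Real.sin φ)

/-- `AB³ᴰ(l,a,b) = ∫_0^{π/2} ∫_0^π min(a, l·sin ψ·|cos φ|)·min(b, l·sin ψ·sin φ) dφ dψ` -/
noncomputable def AB3 (l a b : ℝ) : ℝ :=
  ∫ ψ in (0:ℝ)..(π/2), ∫ φ in (0:ℝ)..π,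
    min a (l * Real.sin ψ * |Real.cos φ|) * min b (l * Real.sin ψ * Real.sin φ)

/-- `S³ᴰ(l,a,b) = b·A³ᴰ(l,a) + a·B³ᴰ(l,b) − AB³ᴰ(l,a,b)` -/
noncomputable def S3 (l a b : ℝ) : ℝ := b * A3 l a + a * B3 l b - AB3 l a b

/-- `F(α,β,t) = ∫_α^β √(sin²ψ − t²) dψ` -/
noncomputable def Faux (α β t : ℝ) : ℝ :=
  ∫ ψ in α..β, Real.sqrt (Real.sin ψ ^ 2 - t ^ 2)

/-- `G(α,β,t) = ∫_α^β (π/2 − arcsin(t / sin ψ)) dψ` -/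
noncomputable def Gaux (α β t : ℝ) : ℝ :=
  ∫ ψ in α..β, (π / 2 - Real.arcsin (t / Real.sin ψ))

lemma int_abs_cos : ∫ φ in (0:ℝ)..π, |Real.cos φ| = 2 := by
  have h1 : ∫ φ in (0:ℝ)..(π/2), |Real.cos φ| = 1 := by
    rw [intervalIntegral.integral_congr (g := Real.cos)]
    · simp [integral_cos]
    · intro x hx
      rw [Set.uIcc_of_le (by positivity)] at hx
      exact abs_of_nonneg (Real.cos_nonneg_of_mem_Icc ⟨by linarith [hx.1, Real.pi_pos], hx.2⟩)
  have h2 : ∫ φ in (π/2:ℝ)..π, |Real.cos φ| = 1 := by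
    rw [intervalIntegral.integral_congr (g := fun x => -Real.cos x)]
    · simp [integral_cos]
    · intro x hx
      rw [Set.uIcc_of_le (by linarith [Real.pi_pos])] at hx
      exact abs_of_nonpos (Real.cos_nonpos_of_pi_div_two_le_of_le hx.1 (by linarith [hx.2, Real.pi_pos]))
  rw [← intervalIntegral.integral_add_adjacent_intervals (b := π/2), h1, h2]
  · norm_num
  · exact (continuous_abs.comp Real.continuous_cos).intervalIntegrable _ _
  · exact (continuous_abs.comp Real.continuous_cos).intervalIntegrable _ _

lemma int_abs_cos_sin : ∫ φ in (0:ℝ)..π, |Real.cos φ| * Real.sin φ = 1 := by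
  have key : ∀ (u v : ℝ), (∫ φ in u..v, Real.cos φ * Real.sin φ) = (Real.sin v ^ 2 - Real.sin u ^ 2) / 2 := by
    intro u v
    have : ∀ x : ℝ, HasDerivAt (fun y => Real.sin y ^ 2 / 2) (Real.cos x * Real.sin x) x := by
      intro x
      have := ((Real.hasDerivAt_sin x).pow 2).div_const 2
      refine this.congr_deriv ?_; norm_num; ring
    rw [intervalIntegral.integral_eq_sub_of_hasDerivAt (fun x _ => this x)
      ((Real.continuous_cos.mul Real.continuous_sin).intervalIntegrable _ _)]
    ring
  have h1 : ∫ φ in (0:ℝ)..(π/2), |Real.cos φ| * Real.sin φ = 1/2 := by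
    rw [intervalIntegral.integral_congr (g := fun x => Real.cos x * Real.sin x)]
    · rw [key]; simp
    · intro x hx
      rw [Set.uIcc_of_le (by positivity)] at hx
      simp only []; rw [abs_of_nonneg (Real.cos_nonneg_of_mem_Icc ⟨by linarith [hx.1, Real.pi_pos], hx.2⟩)]
  have h2 : ∫ φ in (π/2:ℝ)..π, |Real.cos φ| * Real.sin φ = 1/2 := by
    rw [intervalIntegral.integral_congr (g := fun x => -(Real.cos x * Real.sin x))]
    · rw [intervalIntegral.integral_neg, key]; norm_num
    · intro x hx
      rw [Set.uIcc_of_le (by linarith [Real.pi_pos])] at hx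
      have := abs_of_nonpos (Real.cos_nonpos_of_pi_div_two_le_of_le hx.1 (by linarith [hx.2, Real.pi_pos]))
      simp only []; rw [this]; ring
  rw [← intervalIntegral.integral_add_adjacent_intervals (b := π/2), h1, h2]
  · norm_num
  · exact ((continuous_abs.comp Real.continuous_cos).mul Real.continuous_sin).intervalIntegrable _ _
  · exact ((continuous_abs.comp Real.continuous_cos).mul Real.continuous_sin).intervalIntegrable _ _


lemma min_cos_eq (l c : ℝ) (hl : 0 < l) (hc : l ≤ c) (x : ℝ) :
    min c (l * |Real.cos x|) = l * |Real.cos x| :=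
  min_eq_right (le_trans (by nlinarith [abs_cos_le_one x, abs_nonneg (Real.cos x)]) hc)

lemma min_sin_eq (l c : ℝ) (hl : 0 < l) (hc : l ≤ c) (x : ℝ) :
    min c (l * Real.sin x) = l * Real.sin x :=
  min_eq_right (le_trans (by nlinarith [Real.sin_le_one x, Real.neg_one_le_sin x]) hc)

lemma A2_eq (l c : ℝ) (hl : 0 < l) (hc : l ≤ c) : A2 l c = 2 * l := by
  have : A2 l c = ∫ φ in (0:ℝ)..π, l * |Real.cos φ| := by
    unfold A2
    exact intervalIntegral.integral_congr fun x _ => min_cos_eq l c hl hc x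
  rw [this, intervalIntegral.integral_const_mul, int_abs_cos]; ring

lemma B2_eq (l c : ℝ) (hl : 0 < l) (hc : l ≤ c) : B2 l c = 2 * l := by
  have : B2 l c = ∫ φ in (0:ℝ)..π, l * Real.sin φ := by
    unfold B2
    exact intervalIntegral.integral_congr fun x _ => min_sin_eq l c hl hc x
  rw [this, intervalIntegral.integral_const_mul, integral_sin]
  simp; ring

lemma AB2_eq (l c d : ℝ) (hl : 0 < l) (hc : l ≤ c) (hd : l ≤ d) :
    AB2 l c d = l ^ 2 := by
  have : AB2 l c d = ∫ φ in (0:ℝ)..π, l * l * (|Real.cos φ| * Real.sin φ) := by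
    unfold AB2
    refine intervalIntegral.integral_congr fun x _ => ?_
    rw [min_cos_eq l c hl hc x, min_sin_eq l d hl hd x]; ring
  rw [this, intervalIntegral.integral_const_mul, int_abs_cos_sin]; ring

theorem stmt9 (l σ a b : ℝ) (hσ : 0 < σ) (hσb : σ < b) (hba : b ≤ a)
    (hl : 0 < l) (hlb : l ≤ b - σ) :
    P2sc l σ a b = 2 / π * ((b - σ) / b) * (l / a)
      + 2 / π * ((a - σ) / a) * (l / b)
      - 1 / π * (l ^ 2 / (a * b))
      + (σ / a + σ / b - σ ^ 2 / (a * b)) := by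
  have hla : l ≤ a - σ := by linarith
  have ha : (0:ℝ) < a := by linarith
  have hb : (0:ℝ) < b := by linarith
  have hπ := Real.pi_pos
  rw [P2sc, A2_eq l (a-σ) hl hla, B2_eq l (b-σ) hl hlb, AB2_eq l (a-σ) (b-σ) hl hla hlb]
  field_simp
  ring
end

section
/- For real numbers l and b with 0 < b < l, the double integral ∫_{0}^{π/2} ∫_{0}^{π} min(b, l·sin ψ·sin φ) dφ dψ equals 2l − 2l·F(arcsin(b/l), π/2, b/l) + 2b·G(arcsin(b/l), π/2, b/l). -/
open Real MeasureTheory Filter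

open intervalIntegral Set

lemma cont_min (b c : ℝ) : Continuous fun φ => min b (c * Real.sin φ) :=
  continuous_const.min (continuous_const.mul Real.continuous_sin)

lemma inner_le (b c : ℝ) (hc : 0 ≤ c) (h : c ≤ b) :
    ∫ φ in (0:ℝ)..π, min b (c * Real.sin φ) = 2 * c := by
  rw [intervalIntegral.integral_congr (g := fun φ => c * Real.sin φ)
    (fun φ hφ => ?_)]
  · rw [intervalIntegral.integral_const_mul, integral_sin]
    simp; ring
  · rw [Set.uIcc_of_le Real.pi_nonneg] at hφ
    refine min_eq_right ?_
    calc c * Real.sin φ ≤ c * 1 := by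
          exact mul_le_mul_of_nonneg_left (Real.sin_le_one φ) hc
      _ = c := mul_one c
      _ ≤ b := h

lemma inner_ge (b c : ℝ) (hb : 0 < b) (hbc : b ≤ c) :
    ∫ φ in (0:ℝ)..π, min b (c * Real.sin φ)
      = 2 * c - 2 * Real.sqrt (c ^ 2 - b ^ 2) + b * (π - 2 * Real.arcsin (b / c)) := by
  have hc : 0 < c := hb.trans_le hbc
  set x := b / c with hxdef
  have hx0 : 0 < x := div_pos hb hc
  have hx1 : x ≤ 1 := (div_le_one hc).2 hbc
  set φ₀ := Real.arcsin x with hφ₀def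
  have hφ₀0 : 0 < φ₀ := Real.arcsin_pos.2 hx0
  have hφ₀2 : φ₀ ≤ π / 2 := Real.arcsin_le_pi_div_two x
  have hsinφ₀ : Real.sin φ₀ = x := Real.sin_arcsin (by linarith) hx1
  have hcx : c * x = b := by rw [hxdef]; field_simp
  have hpi2 : π / 2 ≤ π - φ₀ := by linarith [Real.pi_pos]
  have hII : ∀ u v : ℝ, IntervalIntegrable (fun φ => min b (c * Real.sin φ)) volume u v :=
    fun u v => (cont_min b c).intervalIntegrable u v
  have hsqrt : c * Real.sqrt (1 - x ^ 2) = Real.sqrt (c ^ 2 - b ^ 2) := by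
    rw [show c ^ 2 - b ^ 2 = c ^ 2 * (1 - x ^ 2) by rw [hxdef]; field_simp,
      Real.sqrt_mul (sq_nonneg c), Real.sqrt_sq hc.le]
  have hcos : Real.cos φ₀ = Real.sqrt (1 - x ^ 2) := Real.cos_arcsin x
  have h1 : ∫ φ in (0:ℝ)..φ₀, min b (c * Real.sin φ) = c * (1 - Real.cos φ₀) := by
    rw [intervalIntegral.integral_congr (g := fun φ => c * Real.sin φ) (fun φ hφ => ?_)]
    · rw [intervalIntegral.integral_const_mul, integral_sin]; simp
    · rw [Set.uIcc_of_le hφ₀0.le] at hφ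
      refine min_eq_right ?_
      have : Real.sin φ ≤ x := by
        rw [← hsinφ₀]
        exact Real.sin_le_sin_of_le_of_le_pi_div_two (by linarith [hφ.1]) hφ₀2 hφ.2
      calc c * Real.sin φ ≤ c * x := mul_le_mul_of_nonneg_left this hc.le
        _ = b := hcx
  have h2 : ∫ φ in φ₀..(π - φ₀), min b (c * Real.sin φ) = b * (π - 2 * φ₀) := by
    rw [intervalIntegral.integral_congr (g := fun _ => b) (fun φ hφ => ?_)]
    · simp; ring
    · rw [Set.uIcc_of_le (by linarith)] at hφ
      refine min_eq_left ?_
      have hsin : x ≤ Real.sin φ := by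
        rcases le_total φ (π / 2) with h | h
        · rw [← hsinφ₀]
          exact Real.sin_le_sin_of_le_of_le_pi_div_two (by linarith) h hφ.1
        · rw [← Real.sin_pi_sub, ← hsinφ₀]
          exact Real.sin_le_sin_of_le_of_le_pi_div_two (by linarith)
            (by linarith) (by linarith [hφ.2])
      calc b = c * x := hcx.symm
        _ ≤ c * Real.sin φ := mul_le_mul_of_nonneg_left hsin hc.le
  have h3 : ∫ φ in (π - φ₀)..π, min b (c * Real.sin φ) = c * (1 - Real.cos φ₀) := by
    rw [intervalIntegral.integral_congr (g := fun φ => c * Real.sin φ) (fun φ hφ => ?_)]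
    · rw [intervalIntegral.integral_const_mul, integral_sin, Real.cos_pi_sub, Real.cos_pi]
      ring
    · rw [Set.uIcc_of_le (by linarith)] at hφ
      refine min_eq_right ?_
      have : Real.sin φ ≤ x := by
        rw [← Real.sin_pi_sub, ← hsinφ₀]
        exact Real.sin_le_sin_of_le_of_le_pi_div_two (by linarith [hφ.2]) hφ₀2
          (by linarith [hφ.1])
      calc c * Real.sin φ ≤ c * x := mul_le_mul_of_nonneg_left this hc.le
        _ = b := hcx
  rw [← intervalIntegral.integral_add_adjacent_intervals (hII 0 φ₀) (hII φ₀ π),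
    ← intervalIntegral.integral_add_adjacent_intervals (hII φ₀ (π - φ₀)) (hII (π - φ₀) π),
    h1, h2, h3, ← hsqrt, hcos]
  ring




theorem stmt14 (l b : ℝ) (hb : 0 < b) (hbl : b < l) :
    B3 l b = 2 * l - 2 * l * Faux (Real.arcsin (b / l)) (π / 2) (b / l)
      + 2 * b * Gaux (Real.arcsin (b / l)) (π / 2) (b / l) := by
  have hl : 0 < l := hb.trans hbl
  set t := b / l with htdef
  have ht0 : 0 < t := div_pos hb hl
  have ht1 : t ≤ 1 := le_of_lt ((div_lt_one hl).2 hbl)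
  set α := Real.arcsin t with hαdef
  have hα0 : 0 < α := Real.arcsin_pos.2 ht0
  have hα2 : α ≤ π / 2 := Real.arcsin_le_pi_div_two t
  have hsinα : Real.sin α = t := Real.sin_arcsin (by linarith) ht1
  have hlt : l * t = b := by rw [htdef]; field_simp
  set f := fun ψ => ∫ φ in (0:ℝ)..π, min b (l * Real.sin ψ * Real.sin φ) with hfdef
  set g2 := fun ψ => 2 * (l * Real.sin ψ) - (2 * l) * Real.sqrt (Real.sin ψ ^ 2 - t ^ 2)
      + (2 * b) * (π / 2 - Real.arcsin (t / Real.sin ψ)) with hg2def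
  have e1 : Set.EqOn f (fun ψ => 2 * (l * Real.sin ψ)) (Set.uIcc 0 α) := by
    intro ψ hψ
    rw [Set.uIcc_of_le hα0.le] at hψ
    have hs0 : 0 ≤ Real.sin ψ := Real.sin_nonneg_of_nonneg_of_le_pi hψ.1
      (by linarith [Real.pi_pos, hψ.2])
    have hst : Real.sin ψ ≤ t := by
      rw [← hsinα]
      exact Real.sin_le_sin_of_le_of_le_pi_div_two (by linarith [hψ.1]) hα2 hψ.2
    exact inner_le b (l * Real.sin ψ) (by positivity) (by nlinarith)
  have e2 : Set.EqOn f g2 (Set.uIcc α (π / 2)) := by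
    intro ψ hψ
    rw [Set.uIcc_of_le hα2] at hψ
    have hst : t ≤ Real.sin ψ := by
      rw [← hsinα]
      exact Real.sin_le_sin_of_le_of_le_pi_div_two (by linarith) hψ.2 hψ.1
    have hs0 : 0 < Real.sin ψ := lt_of_lt_of_le ht0 hst
    have hbc : b ≤ l * Real.sin ψ := by nlinarith
    have h1 : Real.sqrt ((l * Real.sin ψ) ^ 2 - b ^ 2)
        = l * Real.sqrt (Real.sin ψ ^ 2 - t ^ 2) := by
      rw [show (l * Real.sin ψ) ^ 2 - b ^ 2 = l ^ 2 * (Real.sin ψ ^ 2 - t ^ 2) by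
          rw [← hlt]; ring,
        Real.sqrt_mul (sq_nonneg l), Real.sqrt_sq hl.le]
    have h2 : b / (l * Real.sin ψ) = t / Real.sin ψ := by
      rw [← hlt, mul_div_mul_left _ _ hl.ne']
    show f ψ = _
    rw [hfdef]
    simp only
    rw [inner_ge b (l * Real.sin ψ) hb hbc, h1, h2, hg2def]
    ring
  have hI1 : IntervalIntegrable f volume 0 α := by
    refine IntervalIntegrable.congr_ae (f := fun ψ => 2 * (l * Real.sin ψ)) ?_ ?_
    · exact (continuous_const.mul (continuous_const.mul Real.continuous_sin)).intervalIntegrable 0 α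
    · filter_upwards [ae_restrict_mem measurableSet_uIoc] with ψ hψ
      exact (e1 (Set.uIoc_subset_uIcc hψ)).symm
  have hsinpos : ∀ ψ ∈ Set.uIcc α (π / 2), Real.sin ψ ≠ 0 := by
    intro ψ hψ
    rw [Set.uIcc_of_le hα2] at hψ
    have : t ≤ Real.sin ψ := by
      rw [← hsinα]
      exact Real.sin_le_sin_of_le_of_le_pi_div_two (by linarith) hψ.2 hψ.1
    exact (ht0.trans_le this).ne'
  have hcontg2 : ContinuousOn g2 (Set.uIcc α (π / 2)) := by
    apply ContinuousOn.add
    apply ContinuousOn.sub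
    · exact (continuous_const.mul (continuous_const.mul Real.continuous_sin)).continuousOn
    · exact (continuous_const.mul (Real.continuous_sqrt.comp
        ((Real.continuous_sin.pow 2).sub continuous_const))).continuousOn
    · exact continuousOn_const.mul (continuousOn_const.sub
        (Real.continuous_arcsin.comp_continuousOn
          (continuousOn_const.div Real.continuous_sin.continuousOn hsinpos)))
  have hI2 : IntervalIntegrable f volume α (π / 2) := by
    refine IntervalIntegrable.congr_ae (f := g2) (hcontg2.intervalIntegrable) ?_
    filter_upwards [ae_restrict_mem measurableSet_uIoc] with ψ hψ
    exact (e2 (Set.uIoc_subset_uIcc hψ)).symm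
  have hsplit : B3 l b = (∫ ψ in (0:ℝ)..α, f ψ) + ∫ ψ in α..(π/2), f ψ :=
    (intervalIntegral.integral_add_adjacent_intervals hI1 hI2).symm
  have hp1 : (∫ ψ in (0:ℝ)..α, f ψ) = 2 * l * (1 - Real.cos α) := by
    rw [intervalIntegral.integral_congr e1]
    simp_rw [show ∀ ψ : ℝ, 2 * (l * Real.sin ψ) = (2 * l) * Real.sin ψ by intro ψ; ring]
    rw [intervalIntegral.integral_const_mul, integral_sin, Real.cos_zero]
  have hII1 : IntervalIntegrable (fun ψ => 2 * (l * Real.sin ψ)) volume α (π/2) :=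
    (continuous_const.mul (continuous_const.mul Real.continuous_sin)).intervalIntegrable _ _
  have hII2 : IntervalIntegrable
      (fun ψ => (2 * l) * Real.sqrt (Real.sin ψ ^ 2 - t ^ 2)) volume α (π/2) :=
    (continuous_const.mul (Real.continuous_sqrt.comp
      ((Real.continuous_sin.pow 2).sub continuous_const))).intervalIntegrable _ _
  have hII3 : IntervalIntegrable
      (fun ψ => (2 * b) * (π / 2 - Real.arcsin (t / Real.sin ψ))) volume α (π/2) :=
    (continuousOn_const.mul (continuousOn_const.sub
      (Real.continuous_arcsin.comp_continuousOn
        (continuousOn_const.div Real.continuous_sin.continuousOn hsinpos)))).intervalIntegrable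
  have hp2 : (∫ ψ in α..(π/2), f ψ)
      = 2 * l * Real.cos α - 2 * l * Faux α (π/2) t + 2 * b * Gaux α (π/2) t := by
    rw [intervalIntegral.integral_congr e2, hg2def]
    simp only
    rw [intervalIntegral.integral_add (hII1.sub hII2) hII3,
      intervalIntegral.integral_sub hII1 hII2]
    simp_rw [show ∀ ψ : ℝ, 2 * (l * Real.sin ψ) = (2 * l) * Real.sin ψ by intro ψ; ring]
    rw [intervalIntegral.integral_const_mul, intervalIntegral.integral_const_mul,
      intervalIntegral.integral_const_mul, integral_sin, Real.cos_pi_div_two,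
      Faux, Gaux]
    ring
  rw [hsplit, hp1, hp2]
  ring
end
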